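/- Let D be an integral domain and ℓ a length function on D. The zero locus Z(ℓ) = {I ideal of D : ℓ(D/I) = 0} is a localizing system: if I ∈ Z(ℓ) and I ⊆ J then J ∈ Z(ℓ), and if I ∈ Z(ℓ) and (J : iD) ∈ Z(ℓ) for every i ∈ I, then J ∈ Z(ℓ). -/

import Mathlib

open scoped ENNReal

universe u

structure LengthFunction (R : Type u) [CommRing R] where
  toFun : ∀ (M : Type u) [AddCommGroup M] [Module R M], ℝ≥0∞
  zero' : ∀ (M : Type u) [AddCommGroup M] [Module R M], Subsingleton M → toFun M = 0
  additive : ∀ (M₁ M₂ M₃ : Type u) [AddCommGroup M₁] [Module R M₁]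
      [AddCommGroup M₂] [Module R M₂] [AddCommGroup M₃] [Module R M₃]
      (f : M₁ →ₗ[R] M₂) (g : M₂ →ₗ[R] M₃),
      Function.Injective f → Function.Surjective g →
      LinearMap.range f = LinearMap.ker g →
      toFun M₂ = toFun M₁ + toFun M₃
  upperContinuous : ∀ (M : Type u) [AddCommGroup M] [Module R M],
      toFun M = ⨆ (N : Submodule R M) (_ : N.FG), toFun N

namespace LFAux
variable {D : Type u} [CommRing D] (ℓ : LengthFunction D)

lemma len_add {M : Type u} [AddCommGroup M] [Module D M] (N : Submodule D M) :
    ℓ.toFun M = ℓ.toFun N + ℓ.toFun (M ⧸ N) :=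
  ℓ.additive N M (M ⧸ N) N.subtype N.mkQ N.injective_subtype N.mkQ_surjective
    (by rw [Submodule.range_subtype, Submodule.ker_mkQ])

lemma len_le_of_injective {M₁ M₂ : Type u} [AddCommGroup M₁] [Module D M₁]
    [AddCommGroup M₂] [Module D M₂] (f : M₁ →ₗ[D] M₂) (hf : Function.Injective f) :
    ℓ.toFun M₁ ≤ ℓ.toFun M₂ := by
  rw [ℓ.additive M₁ M₂ (M₂ ⧸ LinearMap.range f) f (LinearMap.range f).mkQ hf
    (Submodule.mkQ_surjective _) (Submodule.ker_mkQ _).symm]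
  exact le_self_add

lemma len_le_of_surjective {M₂ M₃ : Type u} [AddCommGroup M₂] [Module D M₂]
    [AddCommGroup M₃] [Module D M₃] (g : M₂ →ₗ[D] M₃) (hg : Function.Surjective g) :
    ℓ.toFun M₃ ≤ ℓ.toFun M₂ := by
  rw [ℓ.additive (LinearMap.ker g) M₂ M₃ (LinearMap.ker g).subtype g
    (Submodule.injective_subtype _) hg (Submodule.range_subtype _)]
  exact le_add_self

lemma len_congr {M₁ M₂ : Type u} [AddCommGroup M₁] [Module D M₁]
    [AddCommGroup M₂] [Module D M₂] (e : M₁ ≃ₗ[D] M₂) : ℓ.toFun M₁ = ℓ.toFun M₂ :=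
  le_antisymm (len_le_of_injective ℓ e.toLinearMap e.injective)
    (len_le_of_injective ℓ e.symm.toLinearMap e.symm.injective)

lemma part1 {I J : Ideal D} (h : ℓ.toFun (D ⧸ I) = 0) (hIJ : I ≤ J) :
    ℓ.toFun (D ⧸ J) = 0 := by
  have hs : Function.Surjective (Submodule.mapQ I J LinearMap.id (by simpa using hIJ)) := by
    intro y
    obtain ⟨x, rfl⟩ := Submodule.mkQ_surjective J y
    exact ⟨Submodule.Quotient.mk x, rfl⟩
  exact le_antisymm (h ▸ len_le_of_surjective ℓ _ hs) (zero_le)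

end LFAux

namespace LFAux
variable {D : Type u} [CommRing D] (ℓ : LengthFunction D)

lemma span_image_zero {I J : Ideal D}
    (hI : ∀ i ∈ I, ℓ.toFun (D ⧸ (J.colon (Ideal.span {i}))) = 0) :
    ∀ s : Finset (D ⧸ J), (↑s ⊆ J.mkQ '' (I : Set D)) →
      ℓ.toFun (Submodule.span D (s : Set (D ⧸ J))) = 0 := by
  classical
  intro s
  induction s using Finset.induction_on with
  | empty =>
    intro _
    refine ℓ.zero' _ ⟨?_⟩
    rintro ⟨a, ha⟩ ⟨b, hb⟩
    simp only [Finset.coe_empty, Submodule.span_empty, Submodule.mem_bot] at ha hb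
    simp [ha, hb]
  | @insert y t hy ih =>
    intro hsub
    rw [Finset.coe_insert] at *
    obtain ⟨i, hiI, hyi⟩ := hsub (Set.mem_insert _ _)
    have hW : ℓ.toFun (Submodule.span D (t : Set (D ⧸ J))) = 0 :=
      ih (fun x hx => hsub (Set.mem_insert_of_mem _ hx))
    set W' : Submodule D (D ⧸ J) := Submodule.span D (insert y (t : Set (D ⧸ J))) with hW'def
    set W : Submodule D (D ⧸ J) := Submodule.span D (t : Set (D ⧸ J)) with hWdef
    have hWW' : W ≤ W' := Submodule.span_mono (Set.subset_insert _ _)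
    set Wh : Submodule D ↥W' := W.comap W'.subtype with hWhdef
    have hy' : y ∈ W' := Submodule.subset_span (Set.mem_insert _ _)
    set φ : D →ₗ[D] (↥W' ⧸ Wh) := Wh.mkQ ∘ₗ LinearMap.toSpanSingleton D ↥W' ⟨y, hy'⟩ with hφ
    have hφs : Function.Surjective φ := by
      intro z
      obtain ⟨w, rfl⟩ := Wh.mkQ_surjective z
      obtain ⟨w, hw⟩ := w
      have hw' : w ∈ Submodule.span D {y} ⊔ W := by
        rw [← Submodule.span_insert]; exact hw
      obtain ⟨u, hu, v, hv, rfl⟩ := Submodule.mem_sup.mp hw'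
      obtain ⟨r, rfl⟩ := Submodule.mem_span_singleton.mp hu
      refine ⟨r, ?_⟩
      have : φ r = Wh.mkQ ⟨r • y, W'.smul_mem r hy'⟩ := rfl
      rw [this, Submodule.mkQ_apply, Submodule.mkQ_apply, Submodule.Quotient.eq]
      change (r • y) - (r • y + v) ∈ W
      simpa using W.neg_mem hv
    have hker : J.colon (Ideal.span {i}) ≤ LinearMap.ker φ := by
      intro r hr
      have hri : r * i ∈ J := by
        have := Submodule.mem_colon.mp hr i (Submodule.mem_span_singleton_self i)
        simpa [smul_eq_mul] using this
      have hry : r • y = 0 := by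
        rw [← hyi, Submodule.mkQ_apply, ← Submodule.Quotient.mk_smul,
          Submodule.Quotient.mk_eq_zero]
        simpa [smul_eq_mul] using hri
      have : φ r = Wh.mkQ ⟨r • y, W'.smul_mem r hy'⟩ := rfl
      rw [LinearMap.mem_ker, this]
      have h0 : (⟨r • y, W'.smul_mem r hy'⟩ : ↥W') = 0 := by
        ext; simp [hry]
      rw [h0, map_zero]
    have hsurj2 : Function.Surjective (Submodule.liftQ _ φ hker) := by
      intro z
      obtain ⟨r, hr⟩ := hφs z
      exact ⟨Submodule.Quotient.mk r, (Submodule.liftQ_apply _ _ _).trans hr⟩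
    have hquot : ℓ.toFun (↥W' ⧸ Wh) = 0 :=
      le_antisymm ((hI i hiI) ▸ len_le_of_surjective ℓ _ hsurj2) (zero_le)
    have hWh : ℓ.toFun ↥Wh = 0 := by
      rw [len_congr ℓ (Submodule.comapSubtypeEquivOfLe hWW')]; exact hW
    have := len_add ℓ Wh
    rw [hWh, hquot] at this
    simpa using this

end LFAux

theorem zero_locus_localizing {D : Type u} [CommRing D] [IsDomain D] (ℓ : LengthFunction D) :
    (∀ I J : Ideal D, ℓ.toFun (D ⧸ I) = 0 → I ≤ J → ℓ.toFun (D ⧸ J) = 0) ∧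
    (∀ I J : Ideal D, ℓ.toFun (D ⧸ I) = 0 →
      (∀ i ∈ I, ℓ.toFun (D ⧸ (J.colon (Ideal.span {i}))) = 0) →
      ℓ.toFun (D ⧸ J) = 0) := by

  constructor
  · exact fun I J h hIJ => LFAux.part1 ℓ h hIJ
  · intro I J hI hcol
    have h0 : ℓ.toFun (D ⧸ (I ⊔ J)) = 0 := LFAux.part1 ℓ hI le_sup_left
    set V : Submodule D (D ⧸ J) := Submodule.map J.mkQ (I ⊔ J : Ideal D) with hV
    have hq : ℓ.toFun ((D ⧸ J) ⧸ V) = 0 := by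
      rw [LFAux.len_congr ℓ (Submodule.quotientQuotientEquivQuotient J (I ⊔ J) le_sup_right)]
      exact h0
    have hVzero : ℓ.toFun ↥V = 0 := by
      rw [ℓ.upperContinuous ↥V]
      simp only [ENNReal.iSup_eq_zero]
      intro N hN
      set N' : Submodule D (D ⧸ J) := N.map V.subtype with hN'
      have eN : ℓ.toFun ↥N = ℓ.toFun ↥N' :=
        LFAux.len_congr ℓ (Submodule.equivMapOfInjective V.subtype V.injective_subtype N)
      obtain ⟨s, hs⟩ := hN.map V.subtype
      have hsub : ↑s ⊆ J.mkQ '' (I : Set D) := by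
        intro y hy
        have hyV : y ∈ V := by
          have : y ∈ N' := by rw [hN', ← hs]; exact Submodule.subset_span hy
          exact Submodule.map_subtype_le V N this
        obtain ⟨x, hx, rfl⟩ := hyV
        obtain ⟨a, ha, b, hb, rfl⟩ := Submodule.mem_sup.mp hx
        refine ⟨a, ha, ?_⟩
        simp only [Submodule.mkQ_apply]
        rw [Submodule.Quotient.eq]
        simpa using J.neg_mem hb
      rw [eN, hN', ← hs]
      exact LFAux.span_image_zero ℓ hcol s hsub
    have := LFAux.len_add ℓ V
    rw [hVzero, hq] at this
    simpa using this
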